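/- Let n ≥ 2 and let λ : {1,…,n} → ℤ be antitone (λ_1 ≥ λ_2 ≥ … ≥ λ_n). Suppose there exist η : {1,…,n} → ℤ and a permutation w of {1,…,n} with w² = id such that λ_i = η_i + η_{w(i)} for all i. For 0 ≤ i ≤ n define r_i = −(λ_{n−i+1} + λ_{n−i+2} + … + λ_n) (so r_0 = 0). Then for every 1 ≤ i ≤ n−1: if r_i is odd, then λ_{n−i} = λ_{n−i+1}, both λ_{n−i} and λ_{n−i+1} are odd, and r_{i+1} is even. -/
import Mathlib


/-- Suppose `λ : {1,…,n} → ℤ` is antitone and can be written as `η + w(η)` for an involution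
`w`.  Let `r_i = −(λ_{n−i+1} + ⋯ + λ_n)` (indices `1`-based; in the `Fin n` model below,
`λ_j` for `1 ≤ j ≤ n` is `lam ⟨j-1⟩`, and `r_i` is minus the sum of the last `i` values).
If `r_i` is odd for some `1 ≤ i ≤ n−1`, then `λ_{n−i} = λ_{n−i+1}`, both are odd, and
`r_{i+1}` is even. -/
theorem odd_r_implies (n : ℕ) (hn : 2 ≤ n) (lam : Fin n → ℤ) (hanti : Antitone lam)
    (hrep : ∃ (η : Fin n → ℤ) (w : Equiv.Perm (Fin n)),
        w * w = 1 ∧ ∀ i, lam i = η i + η (w i))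
    (i : ℕ) (hi1 : 1 ≤ i) (hi2 : i ≤ n - 1)
    (hodd : Odd (-(∑ j ∈ Finset.univ.filter (fun j : Fin n => n - i ≤ (j : ℕ)), lam j))) :
    lam ⟨n - i - 1, by omega⟩ = lam ⟨n - i, by omega⟩ ∧
      Odd (lam ⟨n - i - 1, by omega⟩) ∧ Odd (lam ⟨n - i, by omega⟩) ∧
      Even (-(∑ j ∈ Finset.univ.filter (fun j : Fin n => n - (i + 1) ≤ (j : ℕ)), lam j)) := by
  obtain ⟨η, w, hw, hrep⟩ := hrep
  have hww : ∀ k, w (w k) = k := by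
    intro k
    have := congrArg (fun p : Equiv.Perm (Fin n) => p k) hw
    simpa using this
  have hlw : ∀ k, lam (w k) = lam k := by
    intro k
    rw [hrep (w k), hrep k, hww]; ring
  -- sums over w-invariant sets are even
  have hevensum : ∀ U : Finset (Fin n), (∀ k ∈ U, w k ∈ U) → Even (∑ k ∈ U, lam k) := by
    intro U hU
    have hiff : ∀ k, k ∈ U ↔ w k ∈ U := by
      intro k
      constructor
      · exact hU k
      · intro h; have := hU _ h; rwa [hww] at this
    have h1 : ∑ k ∈ U, η (w k) = ∑ k ∈ U, η k := by
      refine Finset.sum_equiv w (fun k => hiff k) (fun k _ => rfl)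
    have h2 : ∑ k ∈ U, lam k = 2 * ∑ k ∈ U, η k := by
      calc ∑ k ∈ U, lam k = ∑ k ∈ U, (η k + η (w k)) := by
              exact Finset.sum_congr rfl (fun k _ => hrep k)
        _ = ∑ k ∈ U, η k + ∑ k ∈ U, η (w k) := Finset.sum_add_distrib
        _ = 2 * ∑ k ∈ U, η k := by rw [h1]; ring
    exact ⟨∑ k ∈ U, η k, by rw [h2]; ring⟩
  set T : Finset (Fin n) := Finset.univ.filter (fun j : Fin n => n - i ≤ (j : ℕ)) with hT
  have hoddS : Odd (∑ j ∈ T, lam j) := by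
    simpa [odd_neg] using hodd
  -- there is j in the suffix with w j outside
  have hexj : ∃ j ∈ T, w j ∉ T := by
    by_contra h
    push_neg at h
    exact (Int.not_odd_iff_even.mpr (hevensum T h)) hoddS
  obtain ⟨j, hjT, hwjT⟩ := hexj
  have hjn : n - i ≤ (j : ℕ) := by
    have := Finset.mem_filter.mp hjT; exact this.2
  have hwjn : (w j : ℕ) < n - i := by
    by_contra h
    exact hwjT (Finset.mem_filter.mpr ⟨Finset.mem_univ _, by omega⟩)
  set p1 : Fin n := ⟨n - i - 1, by omega⟩ with hp1
  set p2 : Fin n := ⟨n - i, by omega⟩ with hp2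
  have hle1 : w j ≤ p1 := by
    show (w j : ℕ) ≤ n - i - 1
    omega
  have hle2 : p1 ≤ p2 := by show n - i - 1 ≤ n - i; omega
  have hle3 : p2 ≤ j := hjn
  have c1 : lam j ≤ lam p2 := hanti hle3
  have c2 : lam p2 ≤ lam p1 := hanti hle2
  have c3 : lam p1 ≤ lam (w j) := hanti hle1
  have c4 : lam (w j) = lam j := hlw j
  have heq12 : lam p1 = lam p2 := le_antisymm (by omega) c2
  set c : ℤ := lam p2 with hc
  -- the set of strictly smaller values is w-invariant and inside T
  set U : Finset (Fin n) := Finset.univ.filter (fun k : Fin n => lam k < c) with hU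
  have hUinv : ∀ k ∈ U, w k ∈ U := by
    intro k hk
    have := (Finset.mem_filter.mp hk).2
    exact Finset.mem_filter.mpr ⟨Finset.mem_univ _, by rw [hlw]; exact this⟩
  have hUT : U ⊆ T := by
    intro k hk
    have hk2 : lam k < c := (Finset.mem_filter.mp hk).2
    refine Finset.mem_filter.mpr ⟨Finset.mem_univ _, ?_⟩
    by_contra h
    have hkle : k ≤ p1 := by show (k : ℕ) ≤ n - i - 1; omega
    have : lam p1 ≤ lam k := hanti hkle
    rw [heq12] at this
    omega
  have hconst : ∀ k ∈ T \ U, lam k = c := by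
    intro k hk
    obtain ⟨hkT, hkU⟩ := Finset.mem_sdiff.mp hk
    have h1 : ¬ lam k < c := by
      intro h
      exact hkU (Finset.mem_filter.mpr ⟨Finset.mem_univ _, h⟩)
    have hkn : n - i ≤ (k : ℕ) := (Finset.mem_filter.mp hkT).2
    have : lam k ≤ c := hanti (show p2 ≤ k from hkn)
    omega
  have hsplit : ∑ k ∈ T, lam k = ∑ k ∈ U, lam k + ((T \ U).card : ℤ) * c := by
    rw [← Finset.sum_sdiff hUT]
    rw [Finset.sum_congr rfl hconst, Finset.sum_const, nsmul_eq_mul]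
    ring
  have hoddc : Odd c := by
    rw [hsplit] at hoddS
    have hev := hevensum U hUinv
    have : Odd (((T \ U).card : ℤ) * c) := by
      rcases hev with ⟨m, hm⟩
      rcases hoddS with ⟨m', hm'⟩
      exact ⟨m' - m, by omega⟩
    exact (Int.odd_mul.mp this).2
  refine ⟨heq12, by rw [heq12]; exact hoddc, hoddc, ?_⟩
  -- the bigger suffix is insert p1 T
  have hTT : Finset.univ.filter (fun j : Fin n => n - (i + 1) ≤ (j : ℕ)) = insert p1 T := by
    ext k
    simp only [Finset.mem_filter, Finset.mem_univ, true_and, Finset.mem_insert, hT, hp1,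
      Fin.ext_iff]
    have := k.isLt
    omega
  have hp1T : p1 ∉ T := by
    intro h
    have := (Finset.mem_filter.mp h).2
    simp only [hp1] at this
    omega
  rw [hTT, Finset.sum_insert hp1T]
  rw [even_neg]
  have h1 : Odd (lam p1) := by rw [heq12]; exact hoddc
  rcases h1 with ⟨a, ha⟩
  rcases hoddS with ⟨b, hb⟩
  exact ⟨a + b + 1, by omega⟩
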